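/- Let φ be a sequence of pivots applicable to a simple graph G, let S = sup(φ) be its support, and let x, y be distinct vertices of G. Then {x,y} is an edge of Gφ if and only if the induced subgraph G[S ⊕ {x,y}] has an odd number of perfect matchings, i.e. pm(G[S ⊕ {x,y}]) = 1. -/

import Mathlib

set_option linter.unusedSectionVars false
set_option maxHeartbeats 800000

variable {V : Type*} [Fintype V] [DecidableEq V]

/-- Local complementation at a vertex `w`: complement the edges within `N_G(w)`. -/
def SimpleGraph.localComp (G : SimpleGraph V) (w : V) : SimpleGraph V where
  Adj x y := x ≠ y ∧ Xor' (G.Adj x y) (G.Adj x w ∧ G.Adj y w)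
  symm := ⟨by
    intro x y ⟨hne, hx⟩
    refine ⟨hne.symm, ?_⟩
    have h1 := G.adj_comm x y
    unfold Xor' at hx ⊢
    unfold Xor at hx ⊢
    tauto⟩
  loopless := ⟨by intro x ⟨h, _⟩; exact h rfl⟩

/-- `x ∼_G y` : `x = y` or `{x,y}` is an edge of `G`. -/
def SimpleGraph.nbr (G : SimpleGraph V) (x y : V) : Prop := x = y ∨ G.Adj x y

theorem SimpleGraph.nbr_comm (G : SimpleGraph V) (x y : V) : G.nbr x y ↔ G.nbr y x :=
  or_congr eq_comm (G.adj_comm x y)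

private theorem xor_swap_right (a b c : Prop) : Xor' (Xor' a b) c ↔ Xor' (Xor' a c) b := by
  unfold Xor'; unfold Xor; tauto

/-- The pivot `G[uv]` of `G` on an edge `{u,v}`, characterized by
`x ∼_{G[uv]} y ⟺ (x ∼_G y) XOR ((x ∼_G u) ∧ (y ∼_G v)) XOR ((x ∼_G v) ∧ (y ∼_G u))`. -/
def SimpleGraph.pivot (G : SimpleGraph V) (u v : V) : SimpleGraph V where
  Adj x y := x ≠ y ∧
    Xor' (Xor' (G.nbr x y) (G.nbr x u ∧ G.nbr y v)) (G.nbr x v ∧ G.nbr y u)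
  symm := ⟨by
    intro x y ⟨hne, hx⟩
    refine ⟨hne.symm, ?_⟩
    show Xor' (Xor' (G.nbr y x) (G.nbr y u ∧ G.nbr x v)) (G.nbr y v ∧ G.nbr x u)
    rw [G.nbr_comm y x, and_comm (a := G.nbr y u) (b := G.nbr x v),
      and_comm (a := G.nbr y v) (b := G.nbr x u)]
    exact (xor_swap_right _ _ _).mp hx⟩
  loopless := ⟨by intro x ⟨h, _⟩; exact h rfl⟩

/-- Determinant over GF(2) of the adjacency matrix of the subgraph of `G` induced by `S`. -/
noncomputable def gdet (G : SimpleGraph V) (S : Finset V) : ZMod 2 := by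
  classical
  exact Matrix.det (Matrix.of fun i j : S => if G.Adj i j then (1 : ZMod 2) else 0)

/-- Apply a sequence of pivots (left to right). -/
def applyPivots (G : SimpleGraph V) : List (V × V) → SimpleGraph V
  | [] => G
  | p :: φ => applyPivots (G.pivot p.1 p.2) φ

/-- A sequence of pivots is applicable when each pair is an edge of the graph
obtained by applying all preceding pivots. -/
def PivotsApplicable (G : SimpleGraph V) : List (V × V) → Prop
  | [] => True
  | p :: φ => G.Adj p.1 p.2 ∧ PivotsApplicable (G.pivot p.1 p.2) φ

/-- The support of a sequence of pivots: vertices occurring an odd number of times. -/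
def pivotSupport (φ : List (V × V)) : Finset V :=
  Finset.univ.filter fun x => Odd ((φ.flatMap fun p => [p.1, p.2]).count x)

/-- A sequence of pivots is reduced if its pivot vertices are pairwise distinct. -/
def ReducedSeq (φ : List (V × V)) : Prop := (φ.flatMap fun p => [p.1, p.2]).Nodup

/-- The number of perfect matchings of the subgraph of `G` induced by `S`:
sets of edges of `G` inside `S` such that every vertex of `S` lies in exactly one of them. -/
noncomputable def pmCount (G : SimpleGraph V) (S : Finset V) : ℕ := by
  classical
  exact (Finset.univ.filter fun P : Finset (Sym2 V) =>
    (∀ e ∈ P, e ∈ G.edgeSet ∧ ∀ v ∈ e, v ∈ S) ∧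
    ∀ v ∈ S, ∃! e, e ∈ P ∧ v ∈ e).card

open Finset Matrix

namespace PivotAux

open scoped Classical

/-- Adjacency matrix over GF(2). -/
noncomputable def adjM (G : SimpleGraph V) : Matrix V V (ZMod 2) :=
  Matrix.of fun i j => if G.Adj i j then 1 else 0

/-- Compression: the matrix agreeing with `M` on `S × S` and with the identity elsewhere. -/
noncomputable def cpr (M : Matrix V V (ZMod 2)) (S : Finset V) : Matrix V V (ZMod 2) :=
  Matrix.of fun i j => if i ∈ S ∧ j ∈ S then M i j else if i = j then 1 else 0

/-- Matrix-level pivot (principal pivot transform shape). -/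
noncomputable def pivM (M : Matrix V V (ZMod 2)) (u v : V) : Matrix V V (ZMod 2) :=
  Matrix.of fun i j =>
    M i j + (M i u + if i = u then 1 else 0) * (M j v + if j = v then 1 else 0)
          + (M i v + if i = v then 1 else 0) * (M j u + if j = u then 1 else 0)

lemma zmod2_cases (a : ZMod 2) : a = 0 ∨ a = 1 := by revert a; decide

lemma zmod2_add_self (a : ZMod 2) : a + a = 0 := by revert a; decide

lemma zmod2_two_mul (a : ZMod 2) : 2 * a = 0 := by revert a; decide

lemma zmod2_mul_two (a : ZMod 2) : a * 2 = 0 := by revert a; decide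

/-- Rank-one unit update matrix `1 + x eᵤᵀ`. -/
noncomputable def Lm (x : V → ZMod 2) (u : V) : Matrix V V (ZMod 2) :=
  Matrix.of fun p q => (if p = q then 1 else 0) + x p * (if q = u then 1 else 0)

lemma Lm_det (x : V → ZMod 2) (u : V) (h : x u = 0) : (Lm x u).det = 1 := by
  have e : Lm x u
      = 1 + Matrix.replicateCol Unit x * Matrix.replicateRow Unit (fun q => if q = u then (1 : ZMod 2) else 0) := by
    ext p q
    simp [Lm, Matrix.mul_apply, Matrix.one_apply, Matrix.replicateCol_apply, Matrix.replicateRow_apply]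
  rw [e, Matrix.det_one_add_replicateCol_mul_replicateRow]
  simp [dotProduct, ite_mul, h]

lemma Lm_mul_apply (x : V → ZMod 2) (u : V) (C : Matrix V V (ZMod 2)) (p q : V) :
    (Lm x u * C) p q = C p q + x p * C u q := by
  rw [Matrix.mul_apply]
  have h : ∀ r, Lm x u p r * C r q
      = (if p = r then C r q else 0) + (if r = u then x p * C r q else 0) := by
    intro r
    simp only [Lm, Matrix.of_apply]
    split_ifs <;> ring
  rw [Finset.sum_congr rfl fun r _ => h r, Finset.sum_add_distrib]
  congr 1 <;> simp

lemma mul_LmT_apply (y : V → ZMod 2) (w : V) (C : Matrix V V (ZMod 2)) (p q : V) :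
    (C * (Lm y w)ᵀ) p q = C p q + C p w * y q := by
  rw [Matrix.mul_apply]
  have h : ∀ r, C p r * (Lm y w)ᵀ r q
      = (if q = r then C p r else 0) + (if r = w then C p r * y q else 0) := by
    intro r
    simp only [Lm, Matrix.transpose_apply, Matrix.of_apply]
    split_ifs <;> ring
  rw [Finset.sum_congr rfl fun r _ => h r, Finset.sum_add_distrib]
  congr 1 <;> simp

lemma LmCL (x : V → ZMod 2) (u w : V) (y : V → ZMod 2) (C : Matrix V V (ZMod 2)) (p q : V) :
    (Lm x u * C * (Lm y w)ᵀ) p q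
      = C p q + x p * C u q + C p w * y q + x p * C u w * y q := by
  rw [mul_LmT_apply, Lm_mul_apply, Lm_mul_apply]
  ring

lemma det2 (M : Matrix V V (ZMod 2)) : M.det = ∑ σ : Equiv.Perm V, ∏ i, M (σ i) i := by
  rw [Matrix.det_apply]
  refine Finset.sum_congr rfl fun σ _ => ?_
  rcases Int.units_eq_one_or (Equiv.Perm.sign σ) with hs | hs <;> rw [hs]
  · rw [one_smul]
  · rw [Units.smul_def]
    simp only [Units.val_neg, Units.val_one, neg_smul, one_smul]
    rcases zmod2_cases (∏ i, M (σ i) i) with h | h <;> rw [h] <;> decide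

lemma det2_inv (M : Matrix V V (ZMod 2)) (hM : ∀ a b, M a b = M b a) :
    M.det = ∑ σ ∈ Finset.univ.filter (fun σ : Equiv.Perm V => σ * σ = 1), ∏ i, M (σ i) i := by
  rw [det2, ← Finset.sum_filter_add_sum_filter_not Finset.univ
    (fun σ : Equiv.Perm V => σ * σ = 1)]
  have h0 : ∑ σ ∈ Finset.univ.filter (fun σ : Equiv.Perm V => ¬(σ * σ = 1)),
      ∏ i, M (σ i) i = 0 := by
    refine Finset.sum_involution (fun σ _ => σ⁻¹) ?_ ?_ ?_ ?_
    · intro σ _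
      have he : ∏ i, M (σ⁻¹ i) i = ∏ i, M (σ i) i := by
        calc ∏ i, M (σ⁻¹ i) i = ∏ i, M (σ⁻¹ (σ i)) (σ i) := (Equiv.prod_comp σ _).symm
        _ = ∏ i, M i (σ i) := by simp
        _ = ∏ i, M (σ i) i := Finset.prod_congr rfl fun i _ => hM i (σ i)
      rw [he]
      exact zmod2_add_self _
    · intro σ hσ _
      intro heq
      have : σ * σ = 1 := by
        nth_rewrite 1 [← heq]
        exact inv_mul_cancel σ
      exact (Finset.mem_filter.mp hσ).2 this
    · intro σ hσ
      simp only [Finset.mem_filter, Finset.mem_univ, true_and] at hσ ⊢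
      intro heq
      apply hσ
      have := congrArg (·⁻¹) heq
      simpa [_root_.mul_inv_rev] using this
    · intro σ _; simp
  rw [h0, add_zero]

lemma ind_xor (p q : Prop) [Decidable p] [Decidable q] :
    (if Xor' p q then (1 : ZMod 2) else 0) = (if p then 1 else 0) + (if q then 1 else 0) := by
  by_cases hp : p <;> by_cases hq : q <;> simp [Xor', hp, hq] <;> decide

lemma ind_and (p q : Prop) [Decidable p] [Decidable q] :
    (if p ∧ q then (1 : ZMod 2) else 0) = (if p then 1 else 0) * (if q then 1 else 0) := by
  by_cases hp : p <;> by_cases hq : q <;> simp [hp, hq]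

lemma ind_nbr (G : SimpleGraph V) (a b : V) :
    (if G.nbr a b then (1 : ZMod 2) else 0) = adjM G a b + (if a = b then 1 else 0) := by
  by_cases h : a = b
  · subst h
    simp [SimpleGraph.nbr, adjM, (G.loopless.irrefl a)]
  · simp [SimpleGraph.nbr, h, adjM]

/-- entry formula for the adjacency matrix of a pivot. -/
lemma adjM_pivot (G : SimpleGraph V) (u v : V) :
    adjM (G.pivot u v) = pivM (adjM G) u v := by
  ext i j
  show (if (G.pivot u v).Adj i j then (1 : ZMod 2) else 0) = _
  by_cases hij : i = j
  · subst hij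
    rw [if_neg ((G.pivot u v).loopless.irrefl i)]
    simp only [pivM, Matrix.of_apply]
    rw [show adjM G i i = 0 from by simp [adjM, (G.loopless.irrefl i)]]
    rw [zero_add,
      mul_comm (adjM G i v + if i = v then (1 : ZMod 2) else 0)
        (adjM G i u + if i = u then (1 : ZMod 2) else 0)]
    exact (zmod2_add_self _).symm
  · have hiff : (G.pivot u v).Adj i j ↔
        Xor' (Xor' (G.nbr i j) (G.nbr i u ∧ G.nbr j v)) (G.nbr i v ∧ G.nbr j u) := by
      simp [SimpleGraph.pivot, hij]
    rw [if_congr hiff rfl rfl, ind_xor, ind_xor, ind_and, ind_and, ind_nbr, ind_nbr, ind_nbr,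
      ind_nbr, ind_nbr]
    simp only [pivM, Matrix.of_apply]
    rw [if_neg hij]
    ring

lemma pivM_symm (M : Matrix V V (ZMod 2)) (hM : ∀ a b, M a b = M b a) (u v : V) :
    ∀ a b, pivM M u v a b = pivM M u v b a := by
  intro a b
  simp only [pivM, Matrix.of_apply]
  rw [hM a b]
  ring

lemma pivM_comm (M : Matrix V V (ZMod 2)) (u v : V) : pivM M u v = pivM M v u := by
  ext i j
  simp only [pivM, Matrix.of_apply]
  ring

lemma pivM_uv (M : Matrix V V (ZMod 2)) (hM : ∀ a b, M a b = M b a) (u v : V) (huv : u ≠ v)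
    (h1 : M u v = 1) (hu : M u u = 0) (hv : M v v = 0) :
    pivM M u v u v = 1 ∧ pivM M u v u u = 0 ∧ pivM M u v v v = 0 := by
  have h1' : M v u = 1 := (hM v u).trans h1
  refine ⟨?_, ?_, ?_⟩ <;>
    simp only [pivM, Matrix.of_apply, if_neg huv, if_neg (Ne.symm huv), eq_self_iff_true,
      if_true, hu, hv, h1, h1'] <;> decide

lemma pivM_invol (M : Matrix V V (ZMod 2)) (hM : ∀ a b, M a b = M b a) (u v : V) (huv : u ≠ v)
    (h1 : M u v = 1) (hu : M u u = 0) (hv : M v v = 0) :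
    pivM (pivM M u v) u v = M := by
  have h1' : M v u = 1 := (hM v u).trans h1
  have hc : ∀ i, pivM M u v i u + (if i = u then (1 : ZMod 2) else 0)
      = M i v + (if i = v then 1 else 0) := by
    intro i
    simp only [pivM, Matrix.of_apply, if_neg huv, eq_self_iff_true, if_true, hu, h1,
      add_zero, zero_add, mul_one]
    generalize M i u = α
    generalize (if i = u then (1 : ZMod 2) else 0) = β
    generalize M i v = γ
    generalize (if i = v then (1 : ZMod 2) else 0) = δ'
    revert α β γ δ'; decide
  have hd : ∀ i, pivM M u v i v + (if i = v then (1 : ZMod 2) else 0)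
      = M i u + (if i = u then 1 else 0) := by
    intro i
    simp only [pivM, Matrix.of_apply, if_neg (Ne.symm huv), eq_self_iff_true, if_true, hv, h1',
      add_zero, zero_add, mul_one]
    generalize M i u = α
    generalize (if i = u then (1 : ZMod 2) else 0) = β
    generalize M i v = γ
    generalize (if i = v then (1 : ZMod 2) else 0) = δ'
    revert α β γ δ'; decide
  ext i j
  show pivM M u v i j
      + (pivM M u v i u + if i = u then 1 else 0) * (pivM M u v j v + if j = v then 1 else 0)
      + (pivM M u v i v + if i = v then 1 else 0) * (pivM M u v j u + if j = u then 1 else 0)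
      = M i j
  rw [hc i, hd j, hd i, hc j]
  simp only [pivM, Matrix.of_apply]
  generalize (M i u + if i = u then (1 : ZMod 2) else 0) = a
  generalize (M i v + if i = v then (1 : ZMod 2) else 0) = b
  generalize (M j u + if j = u then (1 : ZMod 2) else 0) = c
  generalize (M j v + if j = v then (1 : ZMod 2) else 0) = d
  generalize M i j = m
  revert a b c d m; decide


lemma cpr_apply (N : Matrix V V (ZMod 2)) (S : Finset V) (p q : V) :
    cpr N S p q = if p ∈ S ∧ q ∈ S then N p q else if p = q then 1 else 0 := rfl

lemma pivM_apply (M : Matrix V V (ZMod 2)) (u v p q : V) :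
    pivM M u v p q
      = M p q + (M p u + if p = u then 1 else 0) * (M q v + if q = v then 1 else 0)
        + (M p v + if p = v then 1 else 0) * (M q u + if q = u then 1 else 0) := rfl

lemma swap_one_mul_apply (σ : Equiv.Perm V) (D : Matrix V V (ZMod 2)) (p q : V) :
    (((1 : Matrix V V (ZMod 2)).submatrix σ id) * D) p q = D (σ p) q := by
  rw [Matrix.mul_apply]
  have h : ∀ r, ((1 : Matrix V V (ZMod 2)).submatrix σ id) p r * D r q
      = if σ p = r then D r q else 0 := by
    intro r
    simp only [Matrix.submatrix_apply, Matrix.one_apply, id]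
    split_ifs <;> ring
  rw [Finset.sum_congr rfl fun r _ => h r]
  simp

lemma det_swap_one (u v : V) (huv : u ≠ v) :
    ((1 : Matrix V V (ZMod 2)).submatrix (Equiv.swap u v) id).det = 1 := by
  rw [Matrix.det_permute, Equiv.Perm.sign_swap huv, Matrix.det_one, mul_one]
  decide

lemma cpr_symm (M : Matrix V V (ZMod 2)) (hM : ∀ a b, M a b = M b a) (S : Finset V) (a b : V) :
    cpr M S a b = cpr M S b a := by
  rw [cpr_apply, cpr_apply, hM a b]
  by_cases h : a ∈ S ∧ b ∈ S
  · rw [if_pos h, if_pos ⟨h.2, h.1⟩]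
  · rw [if_neg h, if_neg (show ¬(b ∈ S ∧ a ∈ S) from fun h' => h ⟨h'.2, h'.1⟩)]
    by_cases he : a = b
    · rw [if_pos he, if_pos he.symm]
    · rw [if_neg he, if_neg (show ¬ b = a from fun h' => he h'.symm)]

/-- Case 3: `u ∈ T`, `v ∉ T`, with `R = T \ {u}`. -/
lemma det_cpr_piv_mixed (M : Matrix V V (ZMod 2)) (hM : ∀ a b, M a b = M b a) (u v : V)
    (huv : u ≠ v) (h1 : M u v = 1) (hu : M u u = 0) (hv : M v v = 0)
    (R : Finset V) (huR : u ∉ R) (hvR : v ∉ R) :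
    (cpr (pivM M u v) (insert u R)).det = (cpr M (insert v R)).det := by
  have h1' : M v u = 1 := (hM v u).trans h1
  set x : V → ZMod 2 := (fun p => if p ∈ R then M u p else 0) with hxdef
  have hx : ∀ r, x r = if r ∈ R then M u r else 0 := fun _ => rfl
  have hxu : x u = 0 := by rw [hx, if_neg huR]
  have hxv : x v = 0 := by rw [hx, if_neg hvR]
  set C : Matrix V V (ZMod 2) :=
    (cpr M (insert v R)).submatrix (Equiv.swap u v) (Equiv.swap u v) with hCdef
  have hC : ∀ p q, C p q
      = cpr M (insert v R) (Equiv.swap u v p) (Equiv.swap u v q) := fun _ _ => rfl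
  have hvS : v ∈ insert v R := Finset.mem_insert_self v R
  have huS : u ∉ insert v R := fun hc => (Finset.mem_insert.mp hc).elim huv huR
  have hvT : v ∉ insert u R := fun hc => (Finset.mem_insert.mp hc).elim (Ne.symm huv) hvR
  have huT : u ∈ insert u R := Finset.mem_insert_self u R
  have hmemS : ∀ r, r ∈ R → r ∈ insert v R := fun r hr => Finset.mem_insert_of_mem hr
  have hmemT : ∀ r, r ∈ R → r ∈ insert u R := fun r hr => Finset.mem_insert_of_mem hr
  have hCuu : C u u = 0 := by
    rw [hC, Equiv.swap_apply_left, cpr_apply, if_pos ⟨hvS, hvS⟩, hv]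
  have hCu : ∀ q, C u q = if q ∈ R then M v q else 0 := by
    intro q
    rw [hC, Equiv.swap_apply_left, cpr_apply]
    by_cases hqu : q = u
    · rw [hqu, Equiv.swap_apply_left, if_pos ⟨hvS, hvS⟩, hv, if_neg huR]
    · by_cases hqv : q = v
      · rw [hqv, Equiv.swap_apply_right,
          if_neg (show ¬(v ∈ insert v R ∧ u ∈ insert v R) from fun hc => huS hc.2),
          if_neg (Ne.symm huv), if_neg hvR]
      · rw [Equiv.swap_apply_of_ne_of_ne hqu hqv]
        by_cases hqR : q ∈ R
        · rw [if_pos ⟨hvS, hmemS q hqR⟩, if_pos hqR]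
        · rw [if_neg (show ¬(v ∈ insert v R ∧ q ∈ insert v R) from
            fun hc => (Finset.mem_insert.mp hc.2).elim hqv hqR),
            if_neg (show ¬(v = q) from fun hc => hqv hc.symm), if_neg hqR]
  have hCpu : ∀ p, C p u = if p ∈ R then M p v else 0 := by
    intro p
    rw [hC, Equiv.swap_apply_left, cpr_apply]
    by_cases hpu : p = u
    · rw [hpu, Equiv.swap_apply_left, if_pos ⟨hvS, hvS⟩, hv, if_neg huR]
    · by_cases hpv : p = v
      · rw [hpv, Equiv.swap_apply_right,
          if_neg (show ¬(u ∈ insert v R ∧ v ∈ insert v R) from fun hc => huS hc.1),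
          if_neg huv, if_neg hvR]
      · rw [Equiv.swap_apply_of_ne_of_ne hpu hpv]
        by_cases hpR : p ∈ R
        · rw [if_pos ⟨hmemS p hpR, hvS⟩, if_pos hpR]
        · rw [if_neg (show ¬(p ∈ insert v R ∧ v ∈ insert v R) from
            fun hc => (Finset.mem_insert.mp hc.1).elim hpv hpR),
            if_neg (show ¬(p = v) from hpv), if_neg hpR]
  have hmat : cpr (pivM M u v) (insert u R) = Lm x u * C * (Lm x u)ᵀ := by
    ext p q
    rw [LmCL, hCuu, hCu q, hCpu p, show x p * 0 * x q = 0 from by ring, add_zero, cpr_apply]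
    by_cases hpu : p = u
    · rw [hpu, hxu, zero_mul, add_zero, if_neg huR, zero_mul, add_zero, hCu q]
      by_cases hqu : q = u
      · rw [hqu, if_neg huR, if_pos ⟨huT, huT⟩, pivM_apply, hu, h1]
        simp only [eq_self_iff_true, if_true, if_neg huv]
        decide
      · by_cases hqv : q = v
        · rw [hqv, if_neg hvR,
            if_neg (show ¬(u ∈ insert u R ∧ v ∈ insert u R) from fun hc => hvT hc.2),
            if_neg huv]
        · by_cases hqR : q ∈ R
          · rw [if_pos hqR, if_pos ⟨huT, hmemT q hqR⟩, pivM_apply, hu, h1]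
            simp only [eq_self_iff_true, if_true, if_neg huv, if_neg hqu, if_neg hqv]
            rw [hM q v, hM q u]
            generalize M u q = α
            generalize M v q = β
            revert α β
            decide
          · rw [if_neg hqR,
              if_neg (show ¬(u ∈ insert u R ∧ q ∈ insert u R) from
                fun hc => (Finset.mem_insert.mp hc.2).elim hqu hqR),
              if_neg (show ¬(u = q) from fun hc => hqu hc.symm)]
    · by_cases hpv : p = v
      · rw [hpv, hxv, zero_mul, add_zero, if_neg hvR, zero_mul, add_zero,
          if_neg (show ¬(v ∈ insert u R ∧ q ∈ insert u R) from fun hc => hvT hc.1),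
          hC, Equiv.swap_apply_right]
        by_cases hqu : q = u
        · rw [hqu, Equiv.swap_apply_left, cpr_apply,
            if_neg (show ¬(u ∈ insert v R ∧ v ∈ insert v R) from fun hc => huS hc.1),
            if_neg huv, if_neg (Ne.symm huv)]
        · by_cases hqv : q = v
          · rw [hqv, Equiv.swap_apply_right, cpr_apply,
              if_neg (show ¬(u ∈ insert v R ∧ u ∈ insert v R) from fun hc => huS hc.1),
              if_pos (show (v : V) = v from rfl), if_pos (show (u : V) = u from rfl)]
          · rw [Equiv.swap_apply_of_ne_of_ne hqu hqv, cpr_apply,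
              if_neg (show ¬(u ∈ insert v R ∧ q ∈ insert v R) from fun hc => huS hc.1),
              if_neg (show ¬(u = q) from fun hc => hqu hc.symm),
              if_neg (show ¬(v = q) from fun hc => hqv hc.symm)]
      · have hCpq : C p q = cpr M (insert v R) p (Equiv.swap u v q) := by
          rw [hC, Equiv.swap_apply_of_ne_of_ne hpu hpv]
        rw [hCpq]
        by_cases hpR : p ∈ R
        · rw [hx p, if_pos hpR, if_pos hpR]
          by_cases hqu : q = u
          · rw [hqu, Equiv.swap_apply_left, if_neg huR, mul_zero, add_zero, hxu, mul_zero,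
              add_zero, cpr_apply, if_pos ⟨hmemT p hpR, huT⟩,
              if_pos ⟨hmemS p hpR, hvS⟩, pivM_apply, hu, h1]
            simp only [eq_self_iff_true, if_true, if_neg huv, if_neg hpu, if_neg hpv]
            generalize M p u = α
            generalize M p v = β
            revert α β
            decide
          · by_cases hqv : q = v
            · rw [hqv, Equiv.swap_apply_right, if_neg hvR, mul_zero, add_zero, hxv, mul_zero,
                add_zero, cpr_apply,
                if_neg (show ¬(p ∈ insert v R ∧ u ∈ insert v R) from fun hc => huS hc.2),
                if_neg (show ¬(p = u) from hpu),
                if_neg (show ¬(p ∈ insert u R ∧ v ∈ insert u R) from fun hc => hvT hc.2),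
                if_neg (show ¬(p = v) from hpv)]
            · rw [Equiv.swap_apply_of_ne_of_ne hqu hqv]
              by_cases hqR : q ∈ R
              · rw [if_pos hqR, hx q, if_pos hqR, cpr_apply,
                  if_pos ⟨hmemT p hpR, hmemT q hqR⟩,
                  if_pos ⟨hmemS p hpR, hmemS q hqR⟩, pivM_apply]
                simp only [if_neg hpu, if_neg hpv, if_neg hqu, if_neg hqv, add_zero]
                rw [hM u p, hM v q, hM u q]
              · have hpq : ¬ p = q := fun hc => hqR (hc ▸ hpR)
                rw [if_neg hqR, mul_zero, add_zero, hx q, if_neg hqR, mul_zero, add_zero,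
                  cpr_apply,
                  if_neg (show ¬(p ∈ insert v R ∧ q ∈ insert v R) from
                    fun hc => (Finset.mem_insert.mp hc.2).elim hqv hqR),
                  if_neg hpq,
                  if_neg (show ¬(p ∈ insert u R ∧ q ∈ insert u R) from
                    fun hc => (Finset.mem_insert.mp hc.2).elim hqu hqR)]
        · have hpS : p ∉ insert v R := fun hc => (Finset.mem_insert.mp hc).elim hpv hpR
          have hpT : p ∉ insert u R := fun hc => (Finset.mem_insert.mp hc).elim hpu hpR
          rw [hx p, if_neg hpR, zero_mul, add_zero, if_neg hpR, zero_mul, add_zero,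
            if_neg (show ¬(p ∈ insert u R ∧ q ∈ insert u R) from fun hc => hpT hc.1)]
          by_cases hqu : q = u
          · rw [hqu, Equiv.swap_apply_left, cpr_apply,
              if_neg (show ¬(p ∈ insert v R ∧ v ∈ insert v R) from fun hc => hpS hc.1),
              if_neg (show ¬(p = v) from hpv), if_neg (show ¬(p = u) from hpu)]
          · by_cases hqv : q = v
            · rw [hqv, Equiv.swap_apply_right, cpr_apply,
                if_neg (show ¬(p ∈ insert v R ∧ u ∈ insert v R) from fun hc => hpS hc.1),
                if_neg (show ¬(p = u) from hpu), if_neg (show ¬(p = v) from hpv)]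
            · rw [Equiv.swap_apply_of_ne_of_ne hqu hqv, cpr_apply,
                if_neg (show ¬(p ∈ insert v R ∧ q ∈ insert v R) from fun hc => hpS hc.1)]
  rw [hmat, Matrix.det_mul, Matrix.det_mul, Matrix.det_transpose, Lm_det x u hxu, hCdef,
    Matrix.det_submatrix_equiv_self, one_mul, mul_one]

/-- Case 1: `u, v ∉ T`. -/
lemma det_cpr_piv_out (M : Matrix V V (ZMod 2)) (hM : ∀ a b, M a b = M b a) (u v : V)
    (huv : u ≠ v) (h1 : M u v = 1) (hu : M u u = 0) (hv : M v v = 0)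
    (T : Finset V) (huT : u ∉ T) (hvT : v ∉ T) :
    (cpr (pivM M u v) T).det = (cpr M (insert u (insert v T))).det := by
  have h1' : M v u = 1 := (hM v u).trans h1
  set x1 : V → ZMod 2 := (fun p => if p ∈ T then M v p else 0) with hx1def
  set x2 : V → ZMod 2 := (fun p => if p ∈ T then M u p else 0) with hx2def
  set B : Matrix V V (ZMod 2) := cpr M (insert u (insert v T)) with hBdef
  set D : Matrix V V (ZMod 2) := cpr (pivM M u v) T with hDdef
  have hx1 : ∀ p, x1 p = if p ∈ T then M v p else 0 := fun _ => rfl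
  have hx2 : ∀ p, x2 p = if p ∈ T then M u p else 0 := fun _ => rfl
  have hx1u : x1 u = 0 := by rw [hx1, if_neg huT]
  have hx1v : x1 v = 0 := by rw [hx1, if_neg hvT]
  have hx2u : x2 u = 0 := by rw [hx2, if_neg huT]
  have hx2v : x2 v = 0 := by rw [hx2, if_neg hvT]
  have huS : u ∈ insert u (insert v T) := Finset.mem_insert_self _ _
  have hvS : v ∈ insert u (insert v T) :=
    Finset.mem_insert_of_mem (Finset.mem_insert_self v T)
  have hmemS : ∀ r, r ∈ T → r ∈ insert u (insert v T) :=
    fun r hr => Finset.mem_insert_of_mem (Finset.mem_insert_of_mem hr)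
  have hB : ∀ p q, B p q = cpr M (insert u (insert v T)) p q := fun _ _ => rfl
  have hqS_of : ∀ r, r ≠ u → r ≠ v → r ∉ T → r ∉ insert u (insert v T) := by
    intro r h1 h2 h3 hc
    rcases Finset.mem_insert.mp hc with h | h
    · exact h1 h
    · rcases Finset.mem_insert.mp h with h' | h'
      · exact h2 h'
      · exact h3 h'
  have hBu : ∀ q, B u q = if q = v then 1 else if q ∈ T then M u q else 0 := by
    intro q
    rw [hB, cpr_apply]
    by_cases hqv : q = v
    · rw [hqv, if_pos ⟨huS, hvS⟩, h1, if_pos (show (v : V) = v from rfl)]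
    · by_cases hqu : q = u
      · rw [hqu, if_pos ⟨huS, huS⟩, hu, if_neg (show ¬(u = v) from huv), if_neg huT]
      · by_cases hqT : q ∈ T
        · rw [if_pos ⟨huS, hmemS q hqT⟩, if_neg hqv, if_pos hqT]
        · rw [if_neg (show ¬(u ∈ _ ∧ q ∈ insert u (insert v T)) from
            fun hc => hqS_of q hqu hqv hqT hc.2),
            if_neg (show ¬(u = q) from fun hc => hqu hc.symm), if_neg hqv, if_neg hqT]
  have hBv : ∀ q, B v q = if q = u then 1 else if q ∈ T then M v q else 0 := by
    intro q
    rw [hB, cpr_apply]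
    by_cases hqu : q = u
    · rw [hqu, if_pos ⟨hvS, huS⟩, h1', if_pos (show (u : V) = u from rfl)]
    · by_cases hqv : q = v
      · rw [hqv, if_pos ⟨hvS, hvS⟩, hv, if_neg (Ne.symm huv), if_neg hvT]
      · by_cases hqT : q ∈ T
        · rw [if_pos ⟨hvS, hmemS q hqT⟩, if_neg hqu, if_pos hqT]
        · rw [if_neg (show ¬(v ∈ _ ∧ q ∈ insert u (insert v T)) from
            fun hc => hqS_of q hqu hqv hqT hc.2),
            if_neg (show ¬(v = q) from fun hc => hqv hc.symm), if_neg hqu, if_neg hqT]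
  have hBsym : ∀ a b, B a b = B b a := fun a b => cpr_symm M hM _ a b
  have hBTT : ∀ p q, p ∈ T → q ∈ T → B p q = M p q := by
    intro p q hp hq
    rw [hB, cpr_apply, if_pos ⟨hmemS p hp, hmemS q hq⟩]
  have hBout : ∀ p q, p ≠ u → p ≠ v → p ∉ T → B p q = if p = q then 1 else 0 := by
    intro p q hpu hpv hpT
    rw [hB, cpr_apply, if_neg (show ¬(p ∈ insert u (insert v T) ∧ q ∈ _) from
      fun hc => hqS_of p hpu hpv hpT hc.1)]
  have hBuv : B u v = 1 := by rw [hBu v, if_pos (show (v : V) = v from rfl)]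
  have hBvu : B v u = 1 := by rw [hBv u, if_pos (show (u : V) = u from rfl)]
  have hBvv : B v v = 0 := by rw [hBv v, if_neg (Ne.symm huv), if_neg hvT]
  set E : Matrix V V (ZMod 2) := Lm x2 v * B * (Lm x2 v)ᵀ with hEdef
  have hE : ∀ p q, E p q = B p q + x2 p * B v q + B p v * x2 q := by
    intro p q
    rw [hEdef, LmCL, hBvv]
    ring
  have hEu : ∀ q, E u q = if q = v then 1 else 0 := by
    intro q
    rw [hE, hx2u, zero_mul, add_zero, hBuv, one_mul, hBu q, hx2 q]
    by_cases hqv : q = v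
    · rw [hqv, if_pos (show (v : V) = v from rfl), if_pos (show (v : V) = v from rfl),
        if_neg hvT, add_zero]
    · rw [if_neg hqv, if_neg hqv]
      by_cases hqT : q ∈ T
      · rw [if_pos hqT]
        exact zmod2_add_self _
      · rw [if_neg hqT, add_zero]
  have hEpu : ∀ p, E p u = if p = v then 1 else 0 := by
    intro p
    rw [hE, hx2u, mul_zero, add_zero, hBvu, mul_one, hBsym p u, hBu p, hx2 p]
    by_cases hpv : p = v
    · rw [hpv, if_pos (show (v : V) = v from rfl), if_pos (show (v : V) = v from rfl),
        if_neg hvT, add_zero]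
    · rw [if_neg hpv, if_neg hpv]
      by_cases hpT : p ∈ T
      · rw [if_pos hpT]
        exact zmod2_add_self _
      · rw [if_neg hpT, add_zero]
  have hEuu : E u u = 0 := by rw [hEu u, if_neg huv]
  have hD : ∀ p q, D p q = cpr (pivM M u v) T p q := fun _ _ => rfl
  have hmat : Lm x1 u * E * (Lm x1 u)ᵀ
      = ((1 : Matrix V V (ZMod 2)).submatrix (Equiv.swap u v) id) * D := by
    ext p q
    rw [LmCL, swap_one_mul_apply, hEu q, hEpu p, hEuu,
      show x1 p * 0 * x1 q = 0 from by ring, add_zero]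
    by_cases hpu : p = u
    · rw [hpu, Equiv.swap_apply_left, hx1u, zero_mul, add_zero, if_neg huv, zero_mul,
        add_zero, hEu q, hD, cpr_apply,
        if_neg (show ¬(v ∈ T ∧ q ∈ T) from fun hc => hvT hc.1)]
      by_cases hqv : q = v
      · rw [hqv, if_pos (show (v : V) = v from rfl)]
      · rw [if_neg hqv, if_neg (show ¬(v = q) from fun hc => hqv hc.symm)]
    · by_cases hpv : p = v
      · rw [hpv, Equiv.swap_apply_right, hx1v, zero_mul, add_zero,
          if_pos (show (v : V) = v from rfl), one_mul, hE, hx2v, zero_mul, add_zero,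
          hBvv, zero_mul, add_zero, hBv q, hx1 q, hD, cpr_apply,
          if_neg (show ¬(u ∈ T ∧ q ∈ T) from fun hc => huT hc.1)]
        by_cases hqu : q = u
        · rw [hqu, if_pos (show (u : V) = u from rfl), if_neg huT, add_zero,
            if_pos (show (u : V) = u from rfl)]
        · rw [if_neg hqu, if_neg (show ¬(u = q) from fun hc => hqu hc.symm)]
          by_cases hqT : q ∈ T
          · rw [if_pos hqT]
            exact zmod2_add_self _
          · rw [if_neg hqT, add_zero]
      · rw [Equiv.swap_apply_of_ne_of_ne hpu hpv, if_neg hpv, zero_mul, add_zero]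
        by_cases hpT : p ∈ T
        · rw [hx1 p, if_pos hpT]
          by_cases hqu : q = u
          · rw [hqu, if_neg (show ¬(u = v) from huv), mul_zero, add_zero, hEpu p,
              if_neg hpv, hD, cpr_apply,
              if_neg (show ¬(p ∈ T ∧ u ∈ T) from fun hc => huT hc.2),
              if_neg (show ¬(p = u) from hpu)]
          · by_cases hqv : q = v
            · rw [hqv, if_pos (show (v : V) = v from rfl), mul_one, hE, hBvv, hx2 v,
                if_neg hvT, mul_zero, add_zero, mul_zero, add_zero, hBsym p v, hBv p,
                if_neg hpu, if_pos hpT, hD, cpr_apply,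
                if_neg (show ¬(p ∈ T ∧ v ∈ T) from fun hc => hvT hc.2),
                if_neg (show ¬(p = v) from hpv)]
              exact zmod2_add_self _
            · rw [if_neg hqv, mul_zero, add_zero, hE]
              by_cases hqT : q ∈ T
              · rw [hBTT p q hpT hqT, hBv q, if_neg hqu, if_pos hqT, hBsym p v, hBv p,
                  if_neg hpu, if_pos hpT, hx2 p, if_pos hpT, hx2 q, if_pos hqT, hD,
                  cpr_apply, if_pos ⟨hpT, hqT⟩, pivM_apply]
                simp only [if_neg hpu, if_neg hpv, if_neg hqu, if_neg hqv, add_zero]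
                rw [hM u p, hM v q, hM v p, hM u q]
              · have hpq : ¬ p = q := fun hc => hqT (hc ▸ hpT)
                rw [hBsym p q, hBout q p hqu hqv hqT,
                  if_neg (show ¬(q = p) from fun hc => hpq hc.symm), hBv q, if_neg hqu,
                  if_neg hqT, mul_zero, add_zero, hx2 q, if_neg hqT, mul_zero, add_zero,
                  hD, cpr_apply,
                  if_neg (show ¬(p ∈ T ∧ q ∈ T) from fun hc => hqT hc.2), if_neg hpq]
        · rw [hx1 p, if_neg hpT, zero_mul, add_zero, hE, hx2 p, if_neg hpT, zero_mul,
            add_zero, hBsym p v, hBv p, if_neg hpu, if_neg hpT, zero_mul, add_zero,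
            hBout p q hpu hpv hpT, hD, cpr_apply,
            if_neg (show ¬(p ∈ T ∧ q ∈ T) from fun hc => hpT hc.1)]
  have hdet := congrArg Matrix.det hmat
  rw [Matrix.det_mul, Matrix.det_mul, hEdef, Matrix.det_mul, Matrix.det_mul, Matrix.det_mul,
    Matrix.det_transpose, Matrix.det_transpose, Lm_det x1 u hx1u, Lm_det x2 v hx2v,
    det_swap_one u v huv] at hdet
  have hBD : B.det = D.det := by simpa using hdet
  exact hBD.symm

/-- Lemma B: the pivot determinant identity. -/
lemma det_cpr_piv (M : Matrix V V (ZMod 2)) (hM : ∀ a b, M a b = M b a) (u v : V)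
    (huv : u ≠ v) (h1 : M u v = 1) (hu : M u u = 0) (hv : M v v = 0) (T : Finset V) :
    (cpr (pivM M u v) T).det = (cpr M (symmDiff T {u, v})).det := by
  by_cases huT : u ∈ T
  · by_cases hvT : v ∈ T
    · set R : Finset V := (T.erase u).erase v with hRdef
      have huR : u ∉ R := by simp [hRdef]
      have hvR : v ∉ R := by simp [hRdef]
      have hTR : insert u (insert v R) = T := by
        ext a
        by_cases hau : a = u <;> by_cases hav : a = v <;>
          simp [hRdef, Finset.mem_insert, Finset.mem_erase, hau, hav, huT, hvT, huv,
            Ne.symm huv]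
      have hsd : symmDiff T {u, v} = R := by
        ext a
        by_cases hau : a = u <;> by_cases hav : a = v <;>
          simp [hRdef, Finset.mem_symmDiff, Finset.mem_insert, Finset.mem_erase,
            hau, hav, huT, hvT, huv, Ne.symm huv]
      obtain ⟨h1p, hup, hvp⟩ := pivM_uv M hM u v huv h1 hu hv
      have hMp := pivM_symm M hM u v
      have hkey := det_cpr_piv_out (pivM M u v) hMp u v huv h1p hup hvp R huR hvR
      rw [pivM_invol M hM u v huv h1 hu hv, hTR] at hkey
      rw [hsd, ← hkey]
    · set R : Finset V := T.erase u with hRdef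
      have huR : u ∉ R := by simp [hRdef]
      have hvR : v ∉ R := by simp [hRdef, hvT]
      have hTR : insert u R = T := Finset.insert_erase huT
      have hsd : symmDiff T {u, v} = insert v R := by
        ext a
        by_cases hau : a = u <;> by_cases hav : a = v <;>
          simp [hRdef, Finset.mem_symmDiff, Finset.mem_insert, Finset.mem_erase,
            hau, hav, huT, hvT, huv, Ne.symm huv]
      rw [hsd, ← hTR]
      exact det_cpr_piv_mixed M hM u v huv h1 hu hv R huR hvR
  · by_cases hvT : v ∈ T
    · set R : Finset V := T.erase v with hRdef
      have hvR : v ∉ R := by simp [hRdef]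
      have huR : u ∉ R := by simp [hRdef, huT]
      have hTR : insert v R = T := Finset.insert_erase hvT
      have hsd : symmDiff T {u, v} = insert u R := by
        ext a
        by_cases hau : a = u <;> by_cases hav : a = v <;>
          simp [hRdef, Finset.mem_symmDiff, Finset.mem_insert, Finset.mem_erase,
            hau, hav, huT, hvT, huv, Ne.symm huv]
      rw [hsd, ← hTR, pivM_comm]
      exact det_cpr_piv_mixed M hM v u (Ne.symm huv) ((hM v u).trans h1) hv hu R hvR huR
    · have hsd : symmDiff T {u, v} = insert u (insert v T) := by
        ext a
        by_cases hau : a = u <;> by_cases hav : a = v <;>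
          simp [Finset.mem_symmDiff, Finset.mem_insert, hau, hav, huT, hvT, huv,
            Ne.symm huv]
      rw [hsd]
      exact det_cpr_piv_out M hM u v huv h1 hu hv T huT hvT

lemma pmCount_eq (G : SimpleGraph V) (S : Finset V) :
    pmCount G S = (Finset.univ.filter fun P : Finset (Sym2 V) =>
      (∀ e ∈ P, e ∈ G.edgeSet ∧ ∀ w ∈ e, w ∈ S) ∧ ∀ w ∈ S, ∃! e, e ∈ P ∧ w ∈ e).card := by
  unfold pmCount
  rfl

/-- Back-map from a perfect matching to a function. -/
noncomputable def bg (P : Finset (Sym2 V)) (w : V) : V :=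
  if h : ∃! e, e ∈ P ∧ w ∈ e then Sym2.Mem.other' h.choose_spec.1.2 else w

lemma bg_spec (P : Finset (Sym2 V)) (w : V) (h : ∃! e, e ∈ P ∧ w ∈ e) :
    s(w, bg P w) ∈ P ∧ ∀ e ∈ P, w ∈ e → e = s(w, bg P w) := by
  simp only [bg, dif_pos h]
  rw [Sym2.other_spec' h.choose_spec.1.2]
  exact ⟨h.choose_spec.1.1, fun e heP hwe => h.choose_spec.2 e ⟨heP, hwe⟩⟩

section BackMap

variable (G : SimpleGraph V) (S : Finset V) (P : Finset (Sym2 V))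

lemma bg_fix (hP : ∀ e ∈ P, ∀ w ∈ e, w ∈ S) (w : V) (hw : w ∉ S) : bg P w = w := by
  have hne : ¬ ∃! e, e ∈ P ∧ w ∈ e := by
    rintro ⟨e, ⟨heP, hwe⟩, -⟩
    exact hw (hP e heP w hwe)
  simp only [bg, dif_neg hne]

variable (hP : (∀ e ∈ P, e ∈ G.edgeSet ∧ ∀ w ∈ e, w ∈ S) ∧ ∀ w ∈ S, ∃! e, e ∈ P ∧ w ∈ e)
include hP

lemma bg_edge_mem (w : V) (hw : w ∈ S) : s(w, bg P w) ∈ P :=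
  (bg_spec P w (hP.2 w hw)).1

lemma bg_unique (w : V) (hw : w ∈ S) : ∀ e ∈ P, w ∈ e → e = s(w, bg P w) :=
  (bg_spec P w (hP.2 w hw)).2

lemma bg_memS (w : V) (hw : w ∈ S) : bg P w ∈ S :=
  (hP.1 _ (bg_edge_mem G S P hP w hw)).2 _ (Sym2.mem_mk_right w (bg P w))

lemma bg_adj (w : V) (hw : w ∈ S) : G.Adj w (bg P w) :=
  (SimpleGraph.mem_edgeSet G).mp (hP.1 _ (bg_edge_mem G S P hP w hw)).1

lemma bg_invol : Function.Involutive (bg P) := by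
  intro w
  by_cases hw : w ∈ S
  · have hbS : bg P w ∈ S := bg_memS G S P hP w hw
    have hAdj : G.Adj w (bg P w) := bg_adj G S P hP w hw
    have heq : s(w, bg P w) = s(bg P w, bg P (bg P w)) :=
      bg_unique G S P hP (bg P w) hbS (s(w, bg P w))
        (bg_edge_mem G S P hP w hw) (Sym2.mem_mk_right w (bg P w))
    rw [Sym2.eq_iff] at heq
    rcases heq with ⟨h1, _⟩ | ⟨h1, _⟩
    · exact absurd h1 (G.ne_of_adj hAdj)
    · exact h1.symm
  · have h1 : bg P w = w := bg_fix S P (fun e he => (hP.1 e he).2) w hw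
    rw [h1, h1]

end BackMap

lemma image_matching (G : SimpleGraph V) (S : Finset V) (σ : Equiv.Perm V)
    (hinv : ∀ i, σ (σ i) = i)
    (hadj : ∀ i ∈ S, G.Adj i (σ i)) (hout : ∀ i ∉ S, σ i = i) :
    (∀ e ∈ S.image (fun p => s(p, σ p)), e ∈ G.edgeSet ∧ ∀ w ∈ e, w ∈ S) ∧
    ∀ w ∈ S, ∃! e, e ∈ S.image (fun p => s(p, σ p)) ∧ w ∈ e := by
  have hmapS : ∀ i ∈ S, σ i ∈ S := by
    intro i hi
    by_contra hS
    have h1 : σ (σ i) = σ i := hout (σ i) hS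
    have h2 := hinv i
    rw [h1] at h2
    have h4 := hadj i hi
    rw [h2] at h4
    exact G.loopless.irrefl i h4
  constructor
  · intro e he
    obtain ⟨p, hpS, rfl⟩ := Finset.mem_image.mp he
    refine ⟨(SimpleGraph.mem_edgeSet G).mpr (hadj p hpS), ?_⟩
    intro w hw
    rcases Sym2.mem_iff.mp hw with rfl | rfl
    · exact hpS
    · exact hmapS p hpS
  · intro w hw
    refine ⟨s(w, σ w), ⟨Finset.mem_image_of_mem _ hw, Sym2.mem_mk_left w (σ w)⟩, ?_⟩
    rintro e ⟨heP, hwe⟩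
    obtain ⟨p, hpS, rfl⟩ := Finset.mem_image.mp heP
    rcases Sym2.mem_iff.mp hwe with rfl | rfl
    · rfl
    · rw [hinv p]
      exact Sym2.eq_swap

lemma card_perms_eq_pmCount (G : SimpleGraph V) (S : Finset V) :
    (Finset.univ.filter fun σ : Equiv.Perm V =>
      σ * σ = 1 ∧ (∀ i ∈ S, G.Adj i (σ i)) ∧ ∀ i ∉ S, σ i = i).card = pmCount G S := by
  rw [pmCount_eq]
  have hinv_of : ∀ σ : Equiv.Perm V, σ * σ = 1 → ∀ i, σ (σ i) = i := by
    intro σ hσ i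
    have : (σ * σ) i = i := by rw [hσ]; rfl
    simpa [Equiv.Perm.mul_apply] using this
  refine Finset.card_bij' (i := fun σ _ => S.image fun p => s(p, σ p))
    (j := fun P hP => Function.Involutive.toPerm (bg P)
      (bg_invol G S P (Finset.mem_filter.mp hP).2)) ?_ ?_ ?_ ?_
  · intro σ hσ
    obtain ⟨-, h1, h2, h3⟩ := Finset.mem_filter.mp hσ
    exact Finset.mem_filter.mpr ⟨Finset.mem_univ _,
      image_matching G S σ (hinv_of σ h1) h2 h3⟩
  · intro P hP
    have hP' := (Finset.mem_filter.mp hP).2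
    refine Finset.mem_filter.mpr ⟨Finset.mem_univ _, ?_, ?_, ?_⟩
    · ext i
      rw [Equiv.Perm.mul_apply]
      simp only [Function.Involutive.coe_toPerm]
      rw [bg_invol G S P hP' i]
      rfl
    · intro i hi
      simpa only [Function.Involutive.coe_toPerm] using bg_adj G S P hP' i hi
    · intro i hi
      simpa only [Function.Involutive.coe_toPerm]
        using bg_fix S P (fun e he => (hP'.1 e he).2) i hi
  · intro σ hσ
    obtain ⟨-, h1, h2, h3⟩ := Finset.mem_filter.mp hσ
    have hinv := hinv_of σ h1
    have hmatch := image_matching G S σ hinv h2 h3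
    apply Equiv.ext
    intro w
    simp only [Function.Involutive.coe_toPerm]
    by_cases hw : w ∈ S
    · have h4 := bg_unique G S (S.image fun p => s(p, σ p)) hmatch w hw
        (s(w, σ w)) (Finset.mem_image_of_mem _ hw) (Sym2.mem_mk_left w (σ w))
      have := Sym2.congr_right.mp h4
      exact this.symm
    · rw [bg_fix S _ (fun e he => (hmatch.1 e he).2) w hw, h3 w hw]
  · intro P hP
    have hP' := (Finset.mem_filter.mp hP).2
    ext e
    simp only [Finset.mem_image, Function.Involutive.coe_toPerm]
    constructor
    · rintro ⟨p, hpS, rfl⟩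
      exact bg_edge_mem G S P hP' p hpS
    · intro heP
      induction e using Sym2.ind with
      | _ a b =>
        have haS : a ∈ S := (hP'.1 _ heP).2 a (Sym2.mem_mk_left a b)
        refine ⟨a, haS, ?_⟩
        exact (bg_unique G S P hP' a haS s(a, b) heP (Sym2.mem_mk_left a b)).symm

/-- Lemma A: determinant equals parity of the number of perfect matchings. -/
lemma det_cpr_adjM (G : SimpleGraph V) (S : Finset V) :
    (cpr (adjM G) S).det = (pmCount G S : ZMod 2) := by
  have hsym : ∀ a b, cpr (adjM G) S a b = cpr (adjM G) S b a :=
    cpr_symm _ (fun a b => by simp [adjM, G.adj_comm]) S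
  rw [det2_inv _ hsym]
  have hterm : ∀ σ ∈ Finset.univ.filter (fun σ : Equiv.Perm V => σ * σ = 1),
      (∏ i, cpr (adjM G) S (σ i) i)
        = if (∀ i ∈ S, G.Adj i (σ i)) ∧ (∀ i ∉ S, σ i = i) then 1 else 0 := by
    intro σ hσmem
    have hσ : σ * σ = 1 := (Finset.mem_filter.mp hσmem).2
    have hinv : ∀ i, σ (σ i) = i := by
      intro i
      have : (σ * σ) i = i := by rw [hσ]; rfl
      simpa [Equiv.Perm.mul_apply] using this
    by_cases hgood : (∀ i ∈ S, G.Adj i (σ i)) ∧ (∀ i ∉ S, σ i = i)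
    · rw [if_pos hgood]
      apply Finset.prod_eq_one
      intro i _
      by_cases hi : i ∈ S
      · have hσi : σ i ∈ S := by
          by_contra hout
          have h1 : σ (σ i) = σ i := hgood.2 (σ i) hout
          have h2 := hinv i
          rw [h1] at h2
          have h4 := hgood.1 i hi
          rw [h2] at h4
          exact G.loopless.irrefl i h4
        have hadj : G.Adj (σ i) i := (hgood.1 i hi).symm
        simp [cpr, adjM, hσi, hi, hadj]
      · have hfix : σ i = i := hgood.2 i hi
        simp [cpr, hfix, hi]
    · rw [if_neg hgood, not_and_or] at *
      rcases hgood with hA | hB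
      · push_neg at hA
        obtain ⟨i, hiS, hnadj⟩ := hA
        apply Finset.prod_eq_zero (Finset.mem_univ i)
        by_cases hσS : σ i ∈ S
        · have hnadj' : ¬ G.Adj (σ i) i := fun h => hnadj h.symm
          simp [cpr, adjM, hσS, hiS, hnadj']
        · have hne : σ i ≠ i := fun h => hσS (by rw [h]; exact hiS)
          simp [cpr, hσS, hne]
      · push_neg at hB
        obtain ⟨i, hiS, hne⟩ := hB
        apply Finset.prod_eq_zero (Finset.mem_univ i)
        simp [cpr, hiS, hne]
  rw [Finset.sum_congr rfl hterm, Finset.sum_boole, Finset.filter_filter]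
  norm_cast
  exact congrArg _ (card_perms_eq_pmCount G S)

lemma odd_iff_cast_one (n : ℕ) : Odd n ↔ (n : ZMod 2) = 1 := by
  constructor
  · rintro ⟨k, rfl⟩
    push_cast
    rw [show ((2 : ZMod 2)) = 0 from rfl]
    ring
  · intro h
    rcases Nat.even_or_odd n with he | ho
    · exfalso
      obtain ⟨k, rfl⟩ := he
      rw [show ((k + k : ℕ) : ZMod 2) = 2 * (k : ZMod 2) from by push_cast; ring,
        show ((2 : ZMod 2)) = 0 from rfl, zero_mul] at h
      exact zero_ne_one h
    · exact ho

lemma det_cpr_pair (G : SimpleGraph V) (x y : V) (hxy : x ≠ y) :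
    (cpr (adjM G) {x, y}).det = if G.Adj x y then 1 else 0 := by
  have hxS : x ∈ ({x, y} : Finset V) := Finset.mem_insert_self x {y}
  have hyS : y ∈ ({x, y} : Finset V) := by
    rw [Finset.mem_insert]
    exact Or.inr (Finset.mem_singleton_self y)
  have hmem : ∀ p, p ∈ ({x, y} : Finset V) ↔ p = x ∨ p = y := by
    intro p
    rw [Finset.mem_insert, Finset.mem_singleton]
  by_cases h : G.Adj x y
  · rw [if_pos h]
    have e : cpr (adjM G) {x, y} = (1 : Matrix V V (ZMod 2)).submatrix (Equiv.swap x y) id := by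
      ext p q
      rw [show ((1 : Matrix V V (ZMod 2)).submatrix (Equiv.swap x y) id) p q
          = if Equiv.swap x y p = q then 1 else 0 from by
        simp [Matrix.submatrix_apply, Matrix.one_apply]]
      rw [cpr_apply]
      by_cases hpx : p = x
      · rw [hpx, Equiv.swap_apply_left]
        by_cases hqx : q = x
        · rw [hqx, if_pos ⟨hxS, hxS⟩, show adjM G x x = 0 from by simp [adjM, G.loopless.irrefl x],
            if_neg (Ne.symm hxy)]
        · by_cases hqy : q = y
          · rw [hqy, if_pos ⟨hxS, hyS⟩, show adjM G x y = 1 from by simp [adjM, h],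
              if_pos (show (y : V) = y from rfl)]
          · rw [if_neg (show ¬(x ∈ ({x, y} : Finset V) ∧ q ∈ ({x, y} : Finset V)) from
              fun hc => ((hmem q).mp hc.2).elim hqx hqy),
              if_neg (show ¬(x = q) from fun hc => hqx hc.symm),
              if_neg (show ¬(y = q) from fun hc => hqy hc.symm)]
      · by_cases hpy : p = y
        · rw [hpy, Equiv.swap_apply_right]
          by_cases hqx : q = x
          · rw [hqx, if_pos ⟨hyS, hxS⟩,
              show adjM G y x = 1 from by simp [adjM, h.symm],
              if_pos (show (x : V) = x from rfl)]
          · by_cases hqy : q = y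
            · rw [hqy, if_pos ⟨hyS, hyS⟩,
                show adjM G y y = 0 from by simp [adjM, G.loopless.irrefl y], if_neg hxy]
            · rw [if_neg (show ¬(y ∈ ({x, y} : Finset V) ∧ q ∈ ({x, y} : Finset V)) from
                fun hc => ((hmem q).mp hc.2).elim hqx hqy),
                if_neg (show ¬(y = q) from fun hc => hqy hc.symm),
                if_neg (show ¬(x = q) from fun hc => hqx hc.symm)]
        · rw [Equiv.swap_apply_of_ne_of_ne hpx hpy,
            if_neg (show ¬(p ∈ ({x, y} : Finset V) ∧ q ∈ ({x, y} : Finset V)) from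
              fun hc => ((hmem p).mp hc.1).elim hpx hpy)]
    rw [e, det_swap_one x y hxy]
  · rw [if_neg h]
    have e : cpr (adjM G) {x, y}
        = Matrix.diagonal (fun i => if i = x ∨ i = y then 0 else 1) := by
      ext p q
      by_cases hpq : p = q
      · rw [hpq, Matrix.diagonal_apply_eq, cpr_apply]
        by_cases hqx : q = x
        · rw [if_pos ⟨(hmem q).mpr (Or.inl hqx), (hmem q).mpr (Or.inl hqx)⟩,
            show adjM G q q = 0 from by simp [adjM, G.loopless.irrefl q], if_pos (Or.inl hqx)]
        · by_cases hqy : q = y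
          · rw [if_pos ⟨(hmem q).mpr (Or.inr hqy), (hmem q).mpr (Or.inr hqy)⟩,
              show adjM G q q = 0 from by simp [adjM, G.loopless.irrefl q], if_pos (Or.inr hqy)]
          · rw [if_neg (show ¬(q ∈ ({x, y} : Finset V) ∧ q ∈ ({x, y} : Finset V)) from
              fun hc => ((hmem q).mp hc.1).elim hqx hqy),
              if_pos (show (q : V) = q from rfl),
              if_neg (show ¬(q = x ∨ q = y) from fun hc => hc.elim hqx hqy)]
      · rw [Matrix.diagonal_apply_ne _ hpq, cpr_apply]
        by_cases hcond : p ∈ ({x, y} : Finset V) ∧ q ∈ ({x, y} : Finset V)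
        · rw [if_pos hcond]
          rcases (hmem p).mp hcond.1 with hp | hp <;> rcases (hmem q).mp hcond.2 with hq | hq
          · exact absurd (hp.trans hq.symm) hpq
          · rw [hp, hq]
            simp [adjM, h]
          · rw [hp, hq]
            have hc' : ¬ G.Adj y x := fun hc => h hc.symm
            simp [adjM, hc']
          · exact absurd (hp.trans hq.symm) hpq
        · rw [if_neg hcond, if_neg hpq]
    rw [e, Matrix.det_diagonal]
    refine Finset.prod_eq_zero (Finset.mem_univ x) ?_
    simp

lemma pivotSupport_cons (p : V × V) (hp : p.1 ≠ p.2) (φ : List (V × V)) :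
    pivotSupport (p :: φ) = symmDiff (pivotSupport φ) {p.1, p.2} := by
  ext a
  simp only [pivotSupport, Finset.mem_filter, Finset.mem_univ, true_and, Finset.mem_symmDiff]
  rw [List.flatMap_cons, List.count_append]
  have hc : (List.count a [p.1, p.2]) = if a = p.1 then 1 else if a = p.2 then 1 else 0 := by
    by_cases h1 : a = p.1 <;> by_cases h2 : a = p.2 <;>
      simp_all [List.count_cons, List.count_nil] <;> exact ⟨fun h => h2 h.symm, fun h => h1 h.symm⟩
  rw [hc]
  by_cases h1 : a = p.1 <;> by_cases h2 : a = p.2 <;>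
    simp_all [Nat.odd_iff, Finset.mem_insert, Finset.mem_singleton] <;> omega

lemma key (G : SimpleGraph V) (φ : List (V × V)) (h : PivotsApplicable G φ) (x y : V)
    (hxy : x ≠ y) :
    (if (applyPivots G φ).Adj x y then (1 : ZMod 2) else 0)
      = (cpr (adjM G) (symmDiff (pivotSupport φ) {x, y})).det := by
  induction φ generalizing G with
  | nil =>
    have hsupp : pivotSupport ([] : List (V × V)) = ∅ := by
      simp [pivotSupport]
    have hsd : symmDiff (pivotSupport ([] : List (V × V))) {x, y} = {x, y} := by
      rw [hsupp]
      ext a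
      simp [Finset.mem_symmDiff]
    rw [hsd, det_cpr_pair G x y hxy]
    rfl
  | cons p ψ ih =>
    obtain ⟨hadj, happ⟩ := h
    have huv : p.1 ≠ p.2 := G.ne_of_adj hadj
    have hM : ∀ a b, adjM G a b = adjM G b a := fun a b => by
      simp [adjM, G.adj_comm]
    have h1 : adjM G p.1 p.2 = 1 := by simp [adjM, hadj]
    have hu : adjM G p.1 p.1 = 0 := by simp [adjM, G.loopless]
    have hv : adjM G p.2 p.2 = 0 := by simp [adjM, G.loopless]
    have step := ih (G.pivot p.1 p.2) happ
    rw [show applyPivots G (p :: ψ) = applyPivots (G.pivot p.1 p.2) ψ from rfl, step,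
      adjM_pivot, det_cpr_piv (adjM G) hM p.1 p.2 huv h1 hu hv, pivotSupport_cons p huv ψ,
      symmDiff_assoc, symmDiff_assoc, symmDiff_comm ({x, y} : Finset V) {p.1, p.2}]


end PivotAux

/-- If `φ` is applicable to `G` with support `S` and `x ≠ y`, then
`{x,y} ∈ E(Gφ)` iff `G[S ⊕ {x,y}]` has an odd number of perfect matchings. -/
theorem adj_applyPivots_iff_odd_pm (G : SimpleGraph V) (φ : List (V × V))
    (h : PivotsApplicable G φ) (x y : V) (hxy : x ≠ y) :
    ((applyPivots G φ).Adj x y ↔ Odd (pmCount G (symmDiff (pivotSupport φ) {x, y}))) := by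
  rw [PivotAux.odd_iff_cast_one, ← PivotAux.det_cpr_adjM, ← PivotAux.key G φ h x y hxy]
  by_cases hA : (applyPivots G φ).Adj x y
  · simp [hA]
  · simp only [hA, if_false]
    exact iff_of_false not_false (fun hc => one_ne_zero hc.symm)
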